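/- Up to equivalence, SL₂ × SL₂ has exactly four real group structures: σ_s × σ_s, σ_s × σ_c, σ_c × σ_c, and the swap structure σ(g₁,g₂) = (σ_s(g₂), σ_s(g₁)). In particular, any real group structure on SL₂ × SL₂ either preserves both factors (restricting to a real group structure on each) or swaps them. -/

import Mathlib

open Matrix

/-- `SL₂(ℂ)`. -/
abbrev SL2 := Matrix.SpecialLinearGroup (Fin 2) ℂ

/-- `G = SL₂ × SL₂`. -/
abbrev G2 := SL2 × SL2

/-- The split real group structure `σ_s(g) = conj g` on `SL₂(ℂ)`. -/
noncomputable def sigmaS : SL2 → SL2 := fun g => SpecialLinearGroup.map (starRingEnd ℂ) g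

/-- Transpose on `SL₂(ℂ)`. -/
def transposeSL (g : SL2) : SL2 :=
  ⟨(g : Matrix (Fin 2) (Fin 2) ℂ)ᵀ, by rw [Matrix.det_transpose]; exact g.2⟩

/-- The compact real group structure `σ_c(g) = (conj g)ᵀ⁻¹` on `SL₂(ℂ)`. -/
noncomputable def sigmaC : SL2 → SL2 := fun g => (transposeSL (sigmaS g))⁻¹

/-- The factorwise conjugation `σ_s × σ_s` on `SL₂ × SL₂`. -/
noncomputable def sigmaSS : G2 → G2 := fun g => (sigmaS g.1, sigmaS g.2)

/-- An algebraic group automorphism of `SL₂ × SL₂`: an inner automorphism, possibly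
composed with the swap of the two simple factors. -/
def IsAlgAut (f : G2 → G2) : Prop :=
  ∃ c : G2, (∀ g, f g = c * g * c⁻¹) ∨ (∀ g : G2, f g = c * (g.2, g.1) * c⁻¹)

/-- A real group structure on `SL₂ × SL₂`: a group-theoretic involution `σ` which is
antiregular, i.e. `σ_s × σ_s ∘ σ` is a regular (algebraic) automorphism. -/
def IsRealGroupStructure (σ : G2 → G2) : Prop :=
  (∀ g h, σ (g * h) = σ g * σ h) ∧ (∀ g, σ (σ g) = g) ∧
    IsAlgAut (fun g => sigmaSS (σ g))

/-- Two real group structures on `SL₂ × SL₂` are equivalent if conjugate by an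
algebraic group automorphism. -/
def EquivStruct (σ σ' : G2 → G2) : Prop :=
  ∃ ψ : G2 ≃* G2, IsAlgAut ψ ∧ ∀ g, σ' g = ψ (σ (ψ.symm g))

/-- The structure `σ_s × σ_s`. -/
noncomputable def tau1 : G2 → G2 := fun g => (sigmaS g.1, sigmaS g.2)
/-- The structure `σ_s × σ_c`. -/
noncomputable def tau2 : G2 → G2 := fun g => (sigmaS g.1, sigmaC g.2)
/-- The structure `σ_c × σ_c`. -/
noncomputable def tau3 : G2 → G2 := fun g => (sigmaC g.1, sigmaC g.2)
/-- The swap structure `σ(g₁,g₂) = (σ_s(g₂), σ_s(g₁))`, with real locus `SL₂(ℂ)`. -/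
noncomputable def tau4 : G2 → G2 := fun g => (sigmaS g.2, sigmaS g.1)

-- ===== auxiliary development =====

namespace RS

abbrev M2 := Matrix (Fin 2) (Fin 2) ℂ
abbrev K := starRingEnd ℂ

instance : Fact (Even (Fintype.card (Fin 2))) := ⟨⟨1, rfl⟩⟩

lemma sigmaS_val (g : SL2) : (sigmaS g).val = g.val.map K := rfl

lemma sigmaS_mul (g h : SL2) : sigmaS (g * h) = sigmaS g * sigmaS h :=
  (SpecialLinearGroup.map (starRingEnd ℂ)).map_mul g h

lemma sigmaS_one : sigmaS 1 = 1 := (SpecialLinearGroup.map (starRingEnd ℂ)).map_one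

lemma sigmaS_inv (g : SL2) : sigmaS g⁻¹ = (sigmaS g)⁻¹ :=
  (SpecialLinearGroup.map (starRingEnd ℂ)).map_inv g

lemma sigmaS_sigmaS (g : SL2) : sigmaS (sigmaS g) = g := by
  apply Subtype.ext
  simp [sigmaS_val, Matrix.map_map]
  ext i j
  simp [Matrix.map_apply]

lemma sigmaS_neg (g : SL2) : sigmaS (-g) = -sigmaS g := by
  apply Subtype.ext
  simp [sigmaS_val]
  ext i j
  simp [Matrix.map_apply]

def J : SL2 := ⟨!![0,1;-1,0], by simp [Matrix.det_fin_two_of]⟩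

lemma sigmaS_J : sigmaS J = J := by
  apply Subtype.ext
  rw [sigmaS_val]
  simp only [J]
  ext i j
  fin_cases i <;> fin_cases j <;> simp [Matrix.map_apply]

lemma J_mul_J : J * J = -1 := by
  apply Subtype.ext
  rw [Matrix.SpecialLinearGroup.coe_mul, Matrix.SpecialLinearGroup.coe_neg, Matrix.SpecialLinearGroup.coe_one]
  simp only [J]
  ext i j
  fin_cases i <;> fin_cases j <;> simp [Matrix.mul_apply, Fin.sum_univ_two]

lemma neg_one_central (g : SL2) : (-1 : SL2) * g = g * (-1) := by
  simp

lemma transpose_inv_eq (A : SL2) : (transposeSL A)⁻¹ = J * A * J⁻¹ := by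
  apply Subtype.ext
  rw [Matrix.SpecialLinearGroup.coe_mul, Matrix.SpecialLinearGroup.coe_mul,
    Matrix.SpecialLinearGroup.coe_inv, Matrix.SpecialLinearGroup.coe_inv]
  simp only [transposeSL, Matrix.adjugate_fin_two, J]
  ext i j
  fin_cases i <;> fin_cases j <;>
    simp [Matrix.mul_apply, Fin.sum_univ_two, Matrix.transpose_apply, Matrix.vecMul, dotProduct] <;> ring

lemma sigmaC_eq (g : SL2) : sigmaC g = J * sigmaS g * J⁻¹ := transpose_inv_eq _

def E : SL2 := ⟨!![1,1;0,1], by simp [Matrix.det_fin_two_of]⟩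
def F : SL2 := ⟨!![1,0;1,1], by simp [Matrix.det_fin_two_of]⟩

lemma E_ne_one : E ≠ 1 := by
  intro h
  have := congrFun (congrFun (congrArg Subtype.val h) 0) 1
  simp [E, SpecialLinearGroup.coe_one, Matrix.one_apply] at this

/-- Central elements of SL₂(ℂ). -/
lemma central (z : SL2) (hE : z * E = E * z) (hF : z * F = F * z) :
    z = 1 ∨ z = -1 := by
  have hE' : z.val * E.val = E.val * z.val := congrArg Subtype.val hE
  have hF' : z.val * F.val = F.val * z.val := congrArg Subtype.val hF
  have h10 : z.val 1 0 = 0 := by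
    have := congrFun (congrFun hE' 0) 0
    simp [E, Matrix.mul_apply, Fin.sum_univ_two] at this
    exact this
  have h01 : z.val 0 1 = 0 := by
    have := congrFun (congrFun hF' 1) 1
    simp [F, Matrix.mul_apply, Fin.sum_univ_two] at this
    exact this
  have hdiag : z.val 0 0 = z.val 1 1 := by
    have := congrFun (congrFun hE' 0) 1
    simp [E, Matrix.mul_apply, Fin.sum_univ_two] at this
    linear_combination this
  have hdet : z.val 0 0 * z.val 1 1 - z.val 0 1 * z.val 1 0 = 1 := by
    have := z.2; rw [Matrix.det_fin_two] at this; linear_combination this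
  rw [h01, h10, ← hdiag] at hdet
  have hsq : (z.val 0 0 - 1) * (z.val 0 0 + 1) = 0 := by ring_nf; linear_combination hdet
  rcases mul_eq_zero.mp hsq with h | h
  · left
    apply Matrix.SpecialLinearGroup.ext
    intro i j
    fin_cases i <;> fin_cases j <;>
      simp [Matrix.SpecialLinearGroup.coe_one, Matrix.one_apply, h01, h10] <;>
      [skip; rw [← hdiag]] <;> linear_combination h
  · right
    apply Matrix.SpecialLinearGroup.ext
    intro i j
    fin_cases i <;> fin_cases j <;>
      simp [Matrix.SpecialLinearGroup.coe_one, Matrix.one_apply, h01, h10] <;>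
      [skip; rw [← hdiag]] <;> linear_combination h

/-- A stronger form: commuting with everything. -/
lemma central' (z : SL2) (h : ∀ g : SL2, z * g = g * z) : z = 1 ∨ z = -1 :=
  central z (h E) (h F)

def Dm : M2 := !![1,0;0,-1]

lemma Dm_real : Dm.map K = Dm := by
  ext i j; fin_cases i <;> fin_cases j <;> simp [Dm, Matrix.map_apply]

lemma Dm_det : Dm.det = -1 := by simp [Dm, Matrix.det_fin_two_of]

lemma Dm_mul_Dm : Dm * Dm = 1 := by
  ext i j; fin_cases i <;> fin_cases j <;>
    simp [Dm, Matrix.mul_apply, Fin.sum_univ_two, Matrix.one_apply]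

lemma map_K_smul (x : ℂ) (A : M2) : ((x • A).map K) = (K x) • (A.map K) := by
  ext i j; simp [Matrix.map_apply]

/-- Normalization of the determinant in the Hilbert 90 argument. -/
lemma normalize (C P₀ Q : M2) (hC : C.det = 1)
    (h : C * P₀.map K = P₀ * Q) (hQdet : Q.det = 1) (hQreal : Q.map K = Q)
    (hQD : Dm * Q * Dm = Q ∨ Dm * Q * Dm = -Q) (hP0 : P₀.det ≠ 0) :
    ∃ P : M2, P.det = 1 ∧ (C * P.map K = P * Q ∨ C * P.map K = -(P * Q)) := by
  have hdmap : (P₀.map K).det = K P₀.det := (K.map_det P₀).symm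
  have hdreal : K P₀.det = P₀.det := by
    have := congrArg Matrix.det h
    rw [Matrix.det_mul, Matrix.det_mul, hC, one_mul, hdmap, hQdet, mul_one] at this
    exact this
  obtain ⟨r, hr⟩ := Complex.conj_eq_iff_real.mp hdreal
  have hr0 : r ≠ 0 := by
    intro h0; rw [h0] at hr; simp at hr; exact hP0 hr
  set s : ℝ := (Real.sqrt |r|)⁻¹ with hs
  have hsr : (s : ℝ) ^ 2 * |r| = 1 := by
    rw [hs, inv_pow, Real.sq_sqrt (abs_nonneg r)]
    field_simp
  rcases lt_or_gt_of_ne hr0 with hneg | hpos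
  · -- r < 0
    have h1 : s ^ 2 * (-r) = 1 := by rwa [abs_of_neg hneg] at hsr
    refine ⟨(s : ℂ) • (P₀ * Dm), ?_, ?_⟩
    · rw [Matrix.det_smul, Matrix.det_mul, Dm_det, hr, Fintype.card_fin]
      have h2 : ((s ^ 2 * -r : ℝ) : ℂ) = 1 := by rw [h1]; norm_num
      push_cast at h2
      linear_combination h2
    · have hmap : (((s:ℂ) • (P₀ * Dm)).map K) = (s : ℂ) • (P₀.map K * Dm) := by
        rw [map_K_smul, Complex.conj_ofReal, Matrix.map_mul, Dm_real]
      rw [hmap, Matrix.mul_smul, ← Matrix.mul_assoc, h]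
      rcases hQD with hq | hq
      · left
        have hcomm : Q * Dm = Dm * Q := by
          calc Q * Dm = Dm * Dm * Q * Dm := by rw [Dm_mul_Dm, Matrix.one_mul]
            _ = Dm * (Dm * Q * Dm) := by simp only [Matrix.mul_assoc]
            _ = Dm * Q := by rw [hq]
        rw [Matrix.smul_mul, Matrix.mul_assoc, hcomm, ← Matrix.mul_assoc]
      · right
        have hcomm : Q * Dm = -(Dm * Q) := by
          calc Q * Dm = Dm * Dm * Q * Dm := by rw [Dm_mul_Dm, Matrix.one_mul]
            _ = Dm * (Dm * Q * Dm) := by simp only [Matrix.mul_assoc]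
            _ = -(Dm * Q) := by rw [hq, Matrix.mul_neg]
        rw [Matrix.smul_mul, Matrix.mul_assoc, hcomm, Matrix.mul_neg, ← Matrix.mul_assoc,
          smul_neg]
  · -- r > 0
    have h1 : s ^ 2 * r = 1 := by rwa [abs_of_pos hpos] at hsr
    refine ⟨(s : ℂ) • P₀, ?_, Or.inl ?_⟩
    · rw [Matrix.det_smul, hr, Fintype.card_fin]
      have h2 : ((s ^ 2 * r : ℝ) : ℂ) = 1 := by rw [h1]; norm_num
      push_cast at h2
      linear_combination h2
    · rw [map_K_smul, Complex.conj_ofReal, Matrix.mul_smul, h, Matrix.smul_mul]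

lemma map_K_add (A B : M2) : (A + B).map K = A.map K + B.map K := by
  ext i j; simp [Matrix.map_apply]

lemma map_K_sub (A B : M2) : (A - B).map K = A.map K - B.map K := by
  ext i j; simp [Matrix.map_apply]

lemma map_K_one : (1 : M2).map K = 1 := by
  ext i j; simp [Matrix.map_apply, Matrix.one_apply, apply_ite K]

lemma adj_entries (c : SL2) (h : c * sigmaS c = 1) :
    K (c.val 0 0) = c.val 1 1 ∧ K (c.val 1 1) = c.val 0 0 := by
  have hinv : sigmaS c = c⁻¹ := eq_inv_of_mul_eq_one_right h
  have hval : c.val.map K = adjugate c.val := by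
    rw [← sigmaS_val, hinv]; exact Matrix.SpecialLinearGroup.coe_inv c
  rw [Matrix.adjugate_fin_two] at hval
  constructor
  · have := congrFun (congrFun hval 0) 0; simpa [Matrix.map_apply] using this
  · have := congrFun (congrFun hval 1) 1; simpa [Matrix.map_apply] using this

/-- Hilbert 90, split case. -/
lemma H90s (c : SL2) (h : c * sigmaS c = 1) :
    ∃ p : SL2, c * sigmaS p = p ∨ c * sigmaS p = -p := by
  set C := c.val with hCdef
  have hCC : C * C.map K = 1 := by
    have := congrArg Subtype.val h
    simpa [SpecialLinearGroup.coe_mul, sigmaS_val] using this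
  have hdet : C.det = 1 := c.2
  have hdet2 : C 0 0 * C 1 1 - C 0 1 * C 1 0 = 1 := by
    rw [← Matrix.det_fin_two]; exact hdet
  obtain ⟨h00, h11⟩ := adj_entries c h
  by_cases ht : C 0 0 + C 1 1 = -2
  · -- trace = -2, use P₀ = I • (1 - C)
    have key : ∃ P : M2, P.det = 1 ∧
        (C * P.map K = P * 1 ∨ C * P.map K = -(P * 1)) := by
      refine normalize C (Complex.I • (1 - C)) 1 hdet ?_ Matrix.det_one map_K_one
        (Or.inl (by rw [Matrix.mul_one, Dm_mul_Dm])) ?_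
      · rw [map_K_smul, map_K_sub, map_K_one, Complex.conj_I, Matrix.mul_smul,
          Matrix.mul_sub, Matrix.mul_one, hCC, Matrix.mul_one, neg_smul, ← smul_neg, neg_sub]
      · have hI : Complex.I ^ 2 * Matrix.det (1 - C) = -4 := by
          rw [Complex.I_sq, Matrix.det_fin_two]
          simp only [Matrix.sub_apply, Matrix.one_apply_eq,
            Matrix.one_apply_ne (show (0:Fin 2) ≠ 1 by decide),
            Matrix.one_apply_ne (show (1:Fin 2) ≠ 0 by decide)]
          linear_combination ht - hdet2
        rw [Matrix.det_smul, Fintype.card_fin, hI]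
        norm_num
    obtain ⟨P, hP1, hPrel⟩ := key
    refine ⟨⟨P, hP1⟩, ?_⟩
    rcases hPrel with hrel | hrel
    · left; apply Subtype.ext
      show C * P.map K = P
      simpa [Matrix.SpecialLinearGroup.coe_mul, sigmaS_val, Matrix.mul_one] using hrel
    · right; apply Subtype.ext
      show C * P.map K = -P
      simpa [Matrix.SpecialLinearGroup.coe_mul, sigmaS_val, Matrix.mul_one] using hrel
  · -- trace ≠ -2, use P₀ = C + 1
    have key : ∃ P : M2, P.det = 1 ∧
        (C * P.map K = P * 1 ∨ C * P.map K = -(P * 1)) := by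
      refine normalize C (C + 1) 1 hdet ?_ Matrix.det_one map_K_one
        (Or.inl (by rw [Matrix.mul_one, Dm_mul_Dm])) ?_
      · rw [map_K_add, map_K_one, Matrix.mul_add, hCC, Matrix.mul_one, Matrix.mul_one]
        abel
      · rw [Matrix.det_fin_two]
        simp only [Matrix.add_apply, Matrix.one_apply_eq,
          Matrix.one_apply_ne (show (0:Fin 2) ≠ 1 by decide),
          Matrix.one_apply_ne (show (1:Fin 2) ≠ 0 by decide)]
        intro hzero
        apply ht
        linear_combination hzero - hdet2
    obtain ⟨P, hP1, hPrel⟩ := key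
    refine ⟨⟨P, hP1⟩, ?_⟩
    rcases hPrel with hrel | hrel
    · left; apply Subtype.ext
      show C * P.map K = P
      simpa [Matrix.SpecialLinearGroup.coe_mul, sigmaS_val, Matrix.mul_one] using hrel
    · right; apply Subtype.ext
      show C * P.map K = -P
      simpa [Matrix.SpecialLinearGroup.coe_mul, sigmaS_val, Matrix.mul_one] using hrel

def jm : M2 := !![0,-1;1,0]

lemma jm_det : jm.det = 1 := by simp [jm, Matrix.det_fin_two_of]

lemma jm_real : jm.map K = jm := by
  ext i j; fin_cases i <;> fin_cases j <;> simp [jm, Matrix.map_apply]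

lemma jm_D : Dm * jm * Dm = -jm := by
  ext i j; fin_cases i <;> fin_cases j <;>
    simp [jm, Dm, Matrix.mul_apply, Fin.sum_univ_two]

lemma jm_eq_neg_J : jm = -(J.val) := by
  ext i j; fin_cases i <;> fin_cases j <;> simp [jm, J]

/-- Hilbert 90, compact (quaternionic) case. -/
lemma H90c (c : SL2) (h : c * sigmaS c = -1) :
    ∃ p : SL2, c * sigmaS p = p * J ∨ c * sigmaS p = -(p * J) := by
  set C := c.val with hCdef
  have hCC : C * C.map K = -1 := by
    have := congrArg Subtype.val h
    simpa [SpecialLinearGroup.coe_mul, sigmaS_val] using this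
  have h00 : C 0 0 * K (C 0 0) + C 0 1 * K (C 1 0) = -1 := by
    have := congrFun (congrFun hCC 0) 0
    simpa [Matrix.mul_apply, Fin.sum_univ_two, Matrix.map_apply, Matrix.one_apply] using this
  have h10 : C 1 0 * K (C 0 0) + C 1 1 * K (C 1 0) = 0 := by
    have := congrFun (congrFun hCC 1) 0
    simpa [Matrix.mul_apply, Fin.sum_univ_two, Matrix.map_apply, Matrix.one_apply] using this
  have h11 : C 1 0 * K (C 0 1) + C 1 1 * K (C 1 1) = -1 := by
    have := congrFun (congrFun hCC 1) 1
    simpa [Matrix.mul_apply, Fin.sum_univ_two, Matrix.map_apply, Matrix.one_apply] using this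
  have hC10 : C 1 0 ≠ 0 := by
    intro h0
    rw [h0] at h11
    simp only [zero_mul, mul_zero, zero_add] at h11
    have h2 : ((Complex.normSq (C 1 1) : ℝ) : ℂ) = -1 := by
      rw [← Complex.mul_conj]; exact h11
    have h3 := congrArg Complex.re h2
    simp at h3
    nlinarith [Complex.normSq_nonneg (C 1 1)]
  set P₀ : M2 := !![1, C 0 0; 0, C 1 0] with hP₀
  have key : ∃ P : M2, P.det = 1 ∧
      (C * P.map K = P * jm ∨ C * P.map K = -(P * jm)) := by
    refine normalize C P₀ jm c.2 ?_ jm_det jm_real (Or.inr jm_D) ?_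
    · ext i j
      fin_cases i <;> fin_cases j <;>
        simp [hP₀, jm, Matrix.mul_apply, Fin.sum_univ_two, Matrix.map_apply]
      · linear_combination h00
      · linear_combination h10
    · rw [Matrix.det_fin_two]
      simp [hP₀]
      exact hC10
  obtain ⟨P, hP1, hPrel⟩ := key
  refine ⟨⟨P, hP1⟩, ?_⟩
  have hjm : P * jm = -(P * J.val) := by rw [jm_eq_neg_J, Matrix.mul_neg]
  rcases hPrel with hrel | hrel
  · right; apply Subtype.ext
    rw [hjm] at hrel
    show C * P.map K = -(P * J.val)
    simpa [Matrix.SpecialLinearGroup.coe_mul, sigmaS_val] using hrel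
  · left; apply Subtype.ext
    rw [hjm, neg_neg] at hrel
    show C * P.map K = P * J.val
    simpa [Matrix.SpecialLinearGroup.coe_mul, sigmaS_val] using hrel

lemma conj_formula (c a w : SL2) (hw : a * sigmaS c = w * sigmaS a) (x : SL2) :
    a * sigmaS (c * (a⁻¹ * x * a) * c⁻¹) * a⁻¹ = w * sigmaS x * w⁻¹ := by
  have h1 : a * sigmaS c * (sigmaS a)⁻¹ = w := by
    rw [hw]; group
  have h2 : sigmaS (c * (a⁻¹ * x * a) * c⁻¹)
      = sigmaS c * ((sigmaS a)⁻¹ * sigmaS x * sigmaS a) * (sigmaS c)⁻¹ := by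
    simp only [sigmaS_mul, sigmaS_inv]
  rw [h2, ← h1]
  group

/-- Classification of real structures on a single `SL₂` factor. -/
lemma factor (c : SL2) (h : ∀ x : SL2, (sigmaS c * c) * x = x * (sigmaS c * c)) :
    ∃ a : SL2,
      (∀ x, a * sigmaS (c * (a⁻¹ * x * a) * c⁻¹) * a⁻¹ = sigmaS x) ∨
      (∀ x, a * sigmaS (c * (a⁻¹ * x * a) * c⁻¹) * a⁻¹ = sigmaC x) := by
  have hneginv : (-1 : SL2)⁻¹ = -1 := by
    apply inv_eq_of_mul_eq_one_right; rw [neg_mul_neg, one_mul]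
  rcases central' _ h with hz | hz
  · -- split case
    have hc : c * sigmaS c = 1 := by
      have h1 : sigmaS c = c⁻¹ := by
        have := eq_mul_inv_of_mul_eq hz; rwa [one_mul] at this
      rw [h1, mul_inv_cancel]
    obtain ⟨p, hp⟩ := H90s c hc
    obtain ⟨e, he, hpe⟩ : ∃ e : SL2, (e = 1 ∨ e = -1) ∧ c * sigmaS p = e * p := by
      rcases hp with hp | hp
      · exact ⟨1, Or.inl rfl, by rw [one_mul]; exact hp⟩
      · exact ⟨-1, Or.inr rfl, by rw [neg_one_mul]; exact hp⟩
    have hse : sigmaS e = e := by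
      rcases he with h' | h' <;> subst h' <;> simp [sigmaS_one, sigmaS_neg]
    have hcomm : ∀ y : SL2, e * y = y * e := by
      intro y; rcases he with h' | h' <;> subst h' <;> simp
    have hee : ∀ y : SL2, e * y * e⁻¹ = y := by
      intro y
      rcases he with h' | h' <;> subst h'
      · simp
      · rw [hneginv, neg_one_mul, neg_mul_neg, mul_one]
    have hsc : sigmaS c = e * sigmaS p * p⁻¹ := by
      apply eq_mul_inv_of_mul_eq
      have := congrArg sigmaS hpe
      rwa [sigmaS_mul, sigmaS_sigmaS, sigmaS_mul, hse] at this
    refine ⟨(sigmaS p)⁻¹, Or.inl fun x => ?_⟩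
    have hsa : sigmaS ((sigmaS p)⁻¹) = p⁻¹ := by rw [sigmaS_inv, sigmaS_sigmaS]
    have hw : (sigmaS p)⁻¹ * sigmaS c = e * sigmaS ((sigmaS p)⁻¹) := by
      rw [hsa, hsc, show (sigmaS p)⁻¹ * (e * sigmaS p * p⁻¹)
        = ((sigmaS p)⁻¹ * e) * (sigmaS p * p⁻¹) by group, ← hcomm]
      group
    rw [conj_formula c _ e hw x, hee]
  · -- compact case
    have hc : c * sigmaS c = -1 := by
      have h1 : sigmaS c = -c⁻¹ := by
        have := eq_mul_inv_of_mul_eq hz; rwa [neg_one_mul] at this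
      rw [h1, mul_neg, mul_inv_cancel]
    obtain ⟨p, hp⟩ := H90c c hc
    obtain ⟨e, he, hpe⟩ : ∃ e : SL2, (e = 1 ∨ e = -1) ∧ c * sigmaS p = e * (p * J) := by
      rcases hp with hp | hp
      · exact ⟨1, Or.inl rfl, by rw [one_mul]; exact hp⟩
      · exact ⟨-1, Or.inr rfl, by rw [neg_one_mul]; exact hp⟩
    have hse : sigmaS e = e := by
      rcases he with h' | h' <;> subst h' <;> simp [sigmaS_one, sigmaS_neg]
    have hcomm : ∀ y : SL2, e * y = y * e := by
      intro y; rcases he with h' | h' <;> subst h' <;> simp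
    have hee : ∀ y : SL2, e * y * e⁻¹ = y := by
      intro y
      rcases he with h' | h' <;> subst h'
      · simp
      · rw [hneginv, neg_one_mul, neg_mul_neg, mul_one]
    have hsc : sigmaS c = e * (sigmaS p * J) * p⁻¹ := by
      apply eq_mul_inv_of_mul_eq
      have := congrArg sigmaS hpe
      rwa [sigmaS_mul, sigmaS_sigmaS, sigmaS_mul, sigmaS_mul, hse, sigmaS_J] at this
    refine ⟨(sigmaS p)⁻¹, Or.inr fun x => ?_⟩
    have hsa : sigmaS ((sigmaS p)⁻¹) = p⁻¹ := by rw [sigmaS_inv, sigmaS_sigmaS]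
    have hw : (sigmaS p)⁻¹ * sigmaS c = (e * J) * sigmaS ((sigmaS p)⁻¹) := by
      rw [hsa, hsc, show (sigmaS p)⁻¹ * (e * (sigmaS p * J) * p⁻¹)
        = ((sigmaS p)⁻¹ * e) * (sigmaS p * (J * p⁻¹)) by group, ← hcomm]
      group
    rw [conj_formula c _ (e * J) hw x, sigmaC_eq]
    rw [show e * J * sigmaS x * (e * J)⁻¹ = e * (J * sigmaS x * J⁻¹) * e⁻¹ by group, hee]

lemma sigmaC_mul (g h : SL2) : sigmaC (g * h) = sigmaC g * sigmaC h := by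
  rw [sigmaC_eq, sigmaC_eq, sigmaC_eq, sigmaS_mul]
  group

lemma sigmaC_sigmaC (g : SL2) : sigmaC (sigmaC g) = g := by
  have hneginv : (-1 : SL2)⁻¹ = -1 := by
    apply inv_eq_of_mul_eq_one_right; rw [neg_mul_neg, one_mul]
  rw [sigmaC_eq, sigmaC_eq, sigmaS_mul, sigmaS_mul, sigmaS_inv, sigmaS_J, sigmaS_sigmaS]
  rw [show J * (J * g * J⁻¹) * J⁻¹ = (J * J) * g * (J * J)⁻¹ by group,
    J_mul_J, hneginv, neg_one_mul, neg_mul_neg, mul_one]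

lemma sigmaS_sigmaC (g : SL2) : sigmaS (sigmaC g) = J * g * J⁻¹ := by
  rw [sigmaC_eq, sigmaS_mul, sigmaS_mul, sigmaS_inv, sigmaS_J, sigmaS_sigmaS]

end RS
open RS in
lemma part1 : IsRealGroupStructure tau1 ∧ IsRealGroupStructure tau2 ∧
    IsRealGroupStructure tau3 ∧ IsRealGroupStructure tau4 := by
  refine ⟨⟨?_, ?_, ?_⟩, ⟨?_, ?_, ?_⟩, ⟨?_, ?_, ?_⟩, ⟨?_, ?_, ?_⟩⟩
  · intro g h; simp [tau1, sigmaS_mul, Prod.mul_def]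
  · intro g; simp [tau1, sigmaS_sigmaS]
  · exact ⟨1, Or.inl fun g => by
      simp [tau1, sigmaSS, sigmaS_sigmaS]⟩
  · intro g h; simp [tau2, sigmaS_mul, sigmaC_mul, Prod.mul_def]
  · intro g; simp [tau2, sigmaS_sigmaS, sigmaC_sigmaC]
  · exact ⟨(1, J), Or.inl fun g => by
      simp [tau2, sigmaSS, sigmaS_sigmaS, sigmaS_sigmaC, Prod.mul_def]⟩
  · intro g h; simp [tau3, sigmaC_mul, Prod.mul_def]
  · intro g; simp [tau3, sigmaC_sigmaC]
  · exact ⟨(J, J), Or.inl fun g => by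
      simp [tau3, sigmaSS, sigmaS_sigmaC, Prod.mul_def]⟩
  · intro g h; simp [tau4, sigmaS_mul, Prod.mul_def]
  · intro g; simp [tau4, sigmaS_sigmaS]
  · exact ⟨1, Or.inr fun g => by
      simp [tau4, sigmaSS, sigmaS_sigmaS]⟩

namespace RS

lemma sigmaSS_mul (g h : G2) : sigmaSS (g * h) = sigmaSS g * sigmaSS h := by
  simp [sigmaSS, Prod.mul_def, sigmaS_mul]

lemma sigmaSS_invol (g : G2) : sigmaSS (sigmaSS g) = g := by
  simp [sigmaSS, sigmaS_sigmaS]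

lemma sigmaSS_inv (g : G2) : sigmaSS g⁻¹ = (sigmaSS g)⁻¹ := by
  apply Prod.ext <;> simp [sigmaSS, sigmaS_inv]

/-- The swap map. -/
def swp : G2 → G2 := fun g => (g.2, g.1)

lemma sigmaSS_swp (g : G2) : sigmaSS (swp g) = swp (sigmaSS g) := rfl

lemma swp_mul (g h : G2) : swp (g * h) = swp g * swp h := rfl

lemma swp_swp (g : G2) : swp (swp g) = g := rfl

lemma swp_inv (g : G2) : swp g⁻¹ = (swp g)⁻¹ := rfl

/-- Product-type antiholomorphic data. -/
def Ptype (σ : G2 → G2) : Prop := ∃ c : G2, ∀ g, sigmaSS (σ g) = c * g * c⁻¹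

def Stype (σ : G2 → G2) : Prop := ∃ c : G2, ∀ g, sigmaSS (σ g) = c * swp g * c⁻¹

lemma not_ptype_and_stype (σ : G2 → G2) (hp : Ptype σ) (hs : Stype σ) : False := by
  obtain ⟨c, hc⟩ := hp
  obtain ⟨d, hd⟩ := hs
  have h := (hc (E, 1)).symm.trans (hd (E, 1))
  have h1 := congrArg Prod.fst h
  simp only [Prod.fst_mul, Prod.fst_inv, swp] at h1
  apply E_ne_one
  have : E = c.1⁻¹ * (d.1 * 1 * d.1⁻¹) * c.1 := by
    rw [← h1]; group
  rw [this]; group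

end RS
namespace RS

lemma algaut_symm (ψ : G2 ≃* G2) (h : IsAlgAut ⇑ψ) : IsAlgAut ⇑ψ.symm := by
  obtain ⟨a, ha | ha⟩ := h
  · refine ⟨a⁻¹, Or.inl fun g => ?_⟩
    apply ψ.injective
    rw [MulEquiv.apply_symm_apply, ha]
    group
  · refine ⟨swp a⁻¹, Or.inr fun g => ?_⟩
    apply ψ.injective
    rw [MulEquiv.apply_symm_apply, ha]
    obtain ⟨g1, g2⟩ := g
    obtain ⟨a1, a2⟩ := a
    simp only [swp, Prod.mk_mul_mk, Prod.inv_mk, Prod.mk.injEq, Prod.fst, Prod.snd]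
    constructor <;> group

lemma equiv_symm {σ σ' : G2 → G2} (h : EquivStruct σ σ') : EquivStruct σ' σ := by
  obtain ⟨ψ, hψ, hg⟩ := h
  refine ⟨ψ.symm, algaut_symm ψ hψ, fun g => ?_⟩
  have h2 := hg (ψ g)
  rw [MulEquiv.symm_apply_apply] at h2
  rw [MulEquiv.symm_symm, h2, MulEquiv.symm_apply_apply]

lemma eps_conj (c a e : SL2) (he : sigmaS c * c = e) (hc : e = 1 ∨ e = -1) :
    sigmaS (sigmaS a * c * a⁻¹) * (sigmaS a * c * a⁻¹) = e := by
  rw [sigmaS_mul, sigmaS_mul, sigmaS_inv, sigmaS_sigmaS]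
  rw [show a * sigmaS c * (sigmaS a)⁻¹ * (sigmaS a * c * a⁻¹)
    = a * (sigmaS c * c) * a⁻¹ by group, he]
  rcases hc with h' | h' <;> subst h'
  · group
  · rw [mul_neg_one, neg_mul, mul_inv_cancel]

/-- transfer of product-type cocycles with their signs along an equivalence. -/
lemma eps_transfer (σ σ' : G2 → G2) (c : G2) (e₁ e₂ : SL2)
    (hc : ∀ g, sigmaSS (σ g) = c * g * c⁻¹)
    (he₁ : sigmaS c.1 * c.1 = e₁) (he₂ : sigmaS c.2 * c.2 = e₂)
    (hcen1 : e₁ = 1 ∨ e₁ = -1) (hcen2 : e₂ = 1 ∨ e₂ = -1)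
    (h : EquivStruct σ σ') :
    ∃ c' : G2, (∀ g, sigmaSS (σ' g) = c' * g * c'⁻¹) ∧
      ((sigmaS c'.1 * c'.1 = e₁ ∧ sigmaS c'.2 * c'.2 = e₂) ∨
       (sigmaS c'.1 * c'.1 = e₂ ∧ sigmaS c'.2 * c'.2 = e₁)) := by
  obtain ⟨ψ, ⟨a, ha | ha⟩, hg⟩ := h
  · have hsymm : ∀ g, ψ.symm g = a⁻¹ * g * a := fun g => by
      apply ψ.injective; rw [MulEquiv.apply_symm_apply, ha]; group
    refine ⟨sigmaSS a * c * a⁻¹, fun g => ?_, Or.inl ⟨?_, ?_⟩⟩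
    · rw [hg g, hsymm, ha, sigmaSS_mul, sigmaSS_mul, sigmaSS_inv, hc (a⁻¹ * g * a)]
      group
    · have : (sigmaSS a * c * a⁻¹).1 = sigmaS a.1 * c.1 * a.1⁻¹ := rfl
      rw [this]; exact eps_conj c.1 a.1 e₁ he₁ hcen1
    · have : (sigmaSS a * c * a⁻¹).2 = sigmaS a.2 * c.2 * a.2⁻¹ := rfl
      rw [this]; exact eps_conj c.2 a.2 e₂ he₂ hcen2
  · have hsymm : ∀ g, ψ.symm g = swp (a⁻¹ * g * a) := fun g => by
      apply ψ.injective; rw [MulEquiv.apply_symm_apply, ha]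
      obtain ⟨g1, g2⟩ := g
      obtain ⟨a1, a2⟩ := a
      simp only [swp, Prod.mk_mul_mk, Prod.inv_mk, Prod.mk.injEq, Prod.fst, Prod.snd]
      constructor <;> group
    refine ⟨sigmaSS a * swp c * a⁻¹, fun g => ?_, Or.inr ⟨?_, ?_⟩⟩
    · have hσy : σ (swp (a⁻¹ * g * a)) = sigmaSS (c * swp (a⁻¹ * g * a) * c⁻¹) := by
        rw [← hc (swp (a⁻¹ * g * a)), sigmaSS_invol]
      rw [hg g, hsymm, ha, hσy]
      obtain ⟨g1, g2⟩ := g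
      obtain ⟨a1, a2⟩ := a
      obtain ⟨c1, c2⟩ := c
      simp only [swp, sigmaSS, Prod.mk_mul_mk, Prod.inv_mk, Prod.mk.injEq, Prod.fst, Prod.snd,
        sigmaS_mul, sigmaS_inv, sigmaS_sigmaS]
      constructor <;> group
    · have : (sigmaSS a * swp c * a⁻¹).1 = sigmaS a.1 * c.2 * a.1⁻¹ := rfl
      rw [this]; exact eps_conj c.2 a.1 e₂ he₂ hcen2
    · have : (sigmaSS a * swp c * a⁻¹).2 = sigmaS a.2 * c.1 * a.2⁻¹ := rfl
      rw [this]; exact eps_conj c.1 a.2 e₁ he₁ hcen1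

end RS
namespace RS

lemma one_ne_negone : (1 : SL2) ≠ -1 := by
  intro h
  have := congrFun (congrFun (congrArg Subtype.val h) 0) 0
  simp [SpecialLinearGroup.coe_one, Matrix.one_apply] at this
  norm_num at this

lemma eps_unique1 (c c' : SL2) (h : ∀ x : SL2, c * x * c⁻¹ = c' * x * c'⁻¹) :
    sigmaS c * c = sigmaS c' * c' := by
  set z := c'⁻¹ * c with hzdef
  have hcomm : ∀ x : SL2, z * x = x * z := by
    intro x
    calc z * x = c'⁻¹ * (c * x * c⁻¹) * c := by rw [hzdef]; group
      _ = c'⁻¹ * (c' * x * c'⁻¹) * c := by rw [h x]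
      _ = x * z := by rw [hzdef]; group
  have hc : c = c' * z := by rw [hzdef]; group
  rcases central' z hcomm with h' | h'
  · rw [hc, h', mul_one]
  · rw [hc, h', mul_neg_one, sigmaS_neg, neg_mul_neg]

/-- driver for the inequivalence of product-type structures. -/
lemma ineq_eps (σ σ' : G2 → G2) (c c'' : G2) (e₁ e₂ f₁ f₂ : SL2)
    (hc : ∀ g, sigmaSS (σ g) = c * g * c⁻¹) (hc'' : ∀ g, sigmaSS (σ' g) = c'' * g * c''⁻¹)
    (he₁ : sigmaS c.1 * c.1 = e₁) (he₂ : sigmaS c.2 * c.2 = e₂)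
    (hf₁ : sigmaS c''.1 * c''.1 = f₁) (hf₂ : sigmaS c''.2 * c''.2 = f₂)
    (hcen1 : e₁ = 1 ∨ e₁ = -1) (hcen2 : e₂ = 1 ∨ e₂ = -1)
    (hne : ¬((f₁ = e₁ ∧ f₂ = e₂) ∨ (f₁ = e₂ ∧ f₂ = e₁))) :
    ¬ EquivStruct σ σ' := by
  intro h
  obtain ⟨c', hcoc, heps⟩ := eps_transfer σ σ' c e₁ e₂ hc he₁ he₂ hcen1 hcen2 h
  have hcc : ∀ g, c' * g * c'⁻¹ = c'' * g * c''⁻¹ := fun g => by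
    rw [← hcoc g, hc'' g]
  have hcc1 : ∀ x : SL2, c'.1 * x * c'.1⁻¹ = c''.1 * x * c''.1⁻¹ := fun x => by
    have := congrArg Prod.fst (hcc (x, 1))
    simpa [Prod.fst_mul, Prod.fst_inv] using this
  have hcc2 : ∀ x : SL2, c'.2 * x * c'.2⁻¹ = c''.2 * x * c''.2⁻¹ := fun x => by
    have := congrArg Prod.snd (hcc (1, x))
    simpa [Prod.snd_mul, Prod.snd_inv] using this
  have hu1 : sigmaS c'.1 * c'.1 = f₁ := by rw [eps_unique1 c'.1 c''.1 hcc1, hf₁]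
  have hu2 : sigmaS c'.2 * c'.2 = f₂ := by rw [eps_unique1 c'.2 c''.2 hcc2, hf₂]
  apply hne
  rcases heps with ⟨h1, h2⟩ | ⟨h1, h2⟩
  · exact Or.inl ⟨by rw [← hu1, h1], by rw [← hu2, h2]⟩
  · exact Or.inr ⟨by rw [← hu1, h1], by rw [← hu2, h2]⟩

-- explicit cocycles
lemma coc1 : ∀ g : G2, sigmaSS (tau1 g) = (1 : G2) * g * (1 : G2)⁻¹ := fun g => by
  simp [tau1, sigmaSS, sigmaS_sigmaS]

lemma coc2 : ∀ g : G2, sigmaSS (tau2 g) = ((1 : SL2), J) * g * ((1 : SL2), J)⁻¹ := fun g => by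
  apply Prod.ext <;> simp [tau2, sigmaSS, sigmaS_sigmaS, sigmaS_sigmaC, Prod.mul_def]

lemma coc3 : ∀ g : G2, sigmaSS (tau3 g) = (J, J) * g * (J, J)⁻¹ := fun g => by
  apply Prod.ext <;> simp [tau3, sigmaSS, sigmaS_sigmaC, Prod.mul_def]

lemma coc4 : ∀ g : G2, sigmaSS (tau4 g) = (1 : G2) * swp g * (1 : G2)⁻¹ := fun g => by
  simp [tau4, sigmaSS, sigmaS_sigmaS, swp]

lemma e_one : sigmaS (1 : SL2) * 1 = 1 := by rw [sigmaS_one, one_mul]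
lemma e_J : sigmaS J * J = -1 := by rw [sigmaS_J, J_mul_J]

lemma stype4 : Stype tau4 := ⟨1, coc4⟩

lemma ineq12 : ¬ EquivStruct tau1 tau2 := by
  apply ineq_eps tau1 tau2 1 ((1 : SL2), J) 1 1 1 (-1) coc1 coc2 e_one e_one e_one e_J
    (Or.inl rfl) (Or.inl rfl)
  rintro (⟨-, h⟩ | ⟨-, h⟩) <;> exact one_ne_negone h.symm

lemma ineq13 : ¬ EquivStruct tau1 tau3 := by
  apply ineq_eps tau1 tau3 1 (J, J) 1 1 (-1) (-1) coc1 coc3 e_one e_one e_J e_J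
    (Or.inl rfl) (Or.inl rfl)
  rintro (⟨h, -⟩ | ⟨h, -⟩) <;> exact one_ne_negone h.symm

lemma ineq23 : ¬ EquivStruct tau2 tau3 := by
  apply ineq_eps tau2 tau3 ((1 : SL2), J) (J, J) 1 (-1) (-1) (-1) coc2 coc3 e_one e_J e_J e_J
    (Or.inl rfl) (Or.inr rfl)
  rintro (⟨h, -⟩ | ⟨-, h⟩) <;> exact one_ne_negone h.symm

lemma ineq_with4 (σ : G2 → G2) (c : G2) (e₁ e₂ : SL2)
    (hc : ∀ g, sigmaSS (σ g) = c * g * c⁻¹)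
    (he₁ : sigmaS c.1 * c.1 = e₁) (he₂ : sigmaS c.2 * c.2 = e₂)
    (hcen1 : e₁ = 1 ∨ e₁ = -1) (hcen2 : e₂ = 1 ∨ e₂ = -1) :
    ¬ EquivStruct σ tau4 := by
  intro h
  obtain ⟨c', hcoc, -⟩ := eps_transfer σ tau4 c e₁ e₂ hc he₁ he₂ hcen1 hcen2 h
  exact not_ptype_and_stype tau4 ⟨c', hcoc⟩ stype4

lemma ineq14 : ¬ EquivStruct tau1 tau4 :=
  ineq_with4 tau1 1 1 1 coc1 e_one e_one (Or.inl rfl) (Or.inl rfl)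
lemma ineq24 : ¬ EquivStruct tau2 tau4 :=
  ineq_with4 tau2 ((1 : SL2), J) 1 (-1) coc2 e_one e_J (Or.inl rfl) (Or.inr rfl)
lemma ineq34 : ¬ EquivStruct tau3 tau4 :=
  ineq_with4 tau3 (J, J) (-1) (-1) coc3 e_J e_J (Or.inr rfl) (Or.inr rfl)

end RS

open RS in
lemma part2 : ∀ τ τ' : G2 → G2, τ ∈ [tau1, tau2, tau3, tau4] → τ' ∈ [tau1, tau2, tau3, tau4] →
    τ ≠ τ' → ¬ EquivStruct τ τ' := by
  have symm12 := fun h => ineq12 (equiv_symm h)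
  have symm13 := fun h => ineq13 (equiv_symm h)
  have symm23 := fun h => ineq23 (equiv_symm h)
  have symm14 := fun h => ineq14 (equiv_symm h)
  have symm24 := fun h => ineq24 (equiv_symm h)
  have symm34 := fun h => ineq34 (equiv_symm h)
  intro τ τ' hτ hτ' hne
  simp only [List.mem_cons, List.mem_singleton, List.not_mem_nil, or_false] at hτ hτ'
  rcases hτ with h1 | h1 | h1 | h1 <;> rcases hτ' with h2 | h2 | h2 | h2 <;> subst h1 <;> subst h2 <;>
    first
      | exact absurd rfl hne
      | exact ineq12 | exact ineq13 | exact ineq14 | exact ineq23 | exact ineq24 | exact ineq34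
      | exact symm12 | exact symm13 | exact symm14 | exact symm23 | exact symm24 | exact symm34

namespace RS

/-- Build an equivalence from factorwise conjugation data, inner case. -/
lemma build_inner (σ : G2 → G2) (c a : G2) (t₁ t₂ : SL2 → SL2)
    (hσ : ∀ g : G2, σ g = (sigmaS (c.1 * g.1 * c.1⁻¹), sigmaS (c.2 * g.2 * c.2⁻¹)))
    (h₁ : ∀ x, a.1 * sigmaS (c.1 * (a.1⁻¹ * x * a.1) * c.1⁻¹) * a.1⁻¹ = t₁ x)
    (h₂ : ∀ x, a.2 * sigmaS (c.2 * (a.2⁻¹ * x * a.2) * c.2⁻¹) * a.2⁻¹ = t₂ x) :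
    EquivStruct σ (fun g => (t₁ g.1, t₂ g.2)) := by
  refine ⟨MulAut.conj a, ⟨a, Or.inl fun g => by rw [MulAut.conj_apply]⟩, fun g => ?_⟩
  rw [MulAut.conj_symm_apply, hσ, MulAut.conj_apply]
  apply Prod.ext
  · simp only [Prod.fst_mul, Prod.fst_inv, Prod.snd_mul, Prod.snd_inv]
    exact (h₁ g.1).symm
  · simp only [Prod.fst_mul, Prod.fst_inv, Prod.snd_mul, Prod.snd_inv]
    exact (h₂ g.2).symm

/-- Build an equivalence from factorwise conjugation data, composed with the swap. -/
lemma build_swap (σ : G2 → G2) (c : G2) (a₁ a₂ : SL2) (t₁ t₂ : SL2 → SL2)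
    (hσ : ∀ g : G2, σ g = (sigmaS (c.1 * g.1 * c.1⁻¹), sigmaS (c.2 * g.2 * c.2⁻¹)))
    (h₁ : ∀ x, a₁ * sigmaS (c.1 * (a₁⁻¹ * x * a₁) * c.1⁻¹) * a₁⁻¹ = t₁ x)
    (h₂ : ∀ x, a₂ * sigmaS (c.2 * (a₂⁻¹ * x * a₂) * c.2⁻¹) * a₂⁻¹ = t₂ x) :
    EquivStruct σ (fun g => (t₂ g.1, t₁ g.2)) := by
  refine ⟨(MulEquiv.prodComm : G2 ≃* G2).trans (MulAut.conj ((a₂ : SL2), (a₁ : SL2))),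
    ⟨((a₂ : SL2), (a₁ : SL2)), Or.inr fun g => ?_⟩, fun g => ?_⟩
  · simp only [MulEquiv.trans_apply, MulEquiv.coe_prodComm, MulAut.conj_apply]
    rfl
  · simp only [MulEquiv.trans_apply, MulEquiv.symm_trans_apply, MulEquiv.coe_prodComm,
      MulEquiv.coe_prodComm_symm, MulAut.conj_apply, MulAut.conj_symm_apply, hσ]
    apply Prod.ext <;>
      simp only [Prod.fst_mul, Prod.fst_inv, Prod.snd_mul, Prod.snd_inv, Prod.fst_swap,
        Prod.snd_swap]
    exacts [(h₂ g.1).symm, (h₁ g.2).symm]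

end RS
namespace RS

/-- The swap-type case: any such structure is equivalent to `tau4`. -/
lemma swap_case (σ : G2 → G2) (c : G2)
    (hσ : ∀ g : G2, σ g = (sigmaS (c.1 * g.2 * c.1⁻¹), sigmaS (c.2 * g.1 * c.2⁻¹)))
    (hinv : ∀ g, σ (σ g) = g) :
    EquivStruct σ tau4 := by
  -- the sign
  have hz : ∀ x : SL2, (sigmaS c.1 * c.2) * x = x * (sigmaS c.1 * c.2) := by
    intro x
    have h2 := congrArg Prod.fst (hinv (x, 1))
    rw [hσ (x, 1), hσ _] at h2
    simp only [Prod.fst, Prod.snd] at h2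
    rw [sigmaS_mul, sigmaS_mul, sigmaS_inv, sigmaS_sigmaS] at h2
    calc (sigmaS c.1 * c.2) * x
        = (sigmaS c.1 * (c.2 * x * c.2⁻¹) * (sigmaS c.1)⁻¹) * (sigmaS c.1 * c.2) := by group
      _ = x * (sigmaS c.1 * c.2) := by rw [h2]
  obtain ⟨e, he, hcome, hse⟩ : ∃ e : SL2, sigmaS c.1 * c.2 = e ∧ (∀ y : SL2, e * y = y * e)
      ∧ sigmaS e = e := by
    rcases central' _ hz with h' | h'
    · exact ⟨1, h', fun y => by group, sigmaS_one⟩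
    · refine ⟨-1, h', fun y => by simp, by rw [sigmaS_neg, sigmaS_one]⟩
  have hsc2 : sigmaS c.2 * c.1 = e := by
    have h3 := congrArg sigmaS he
    rw [sigmaS_mul, sigmaS_sigmaS, hse] at h3
    -- h3 : c.1 * sigmaS c.2 = e
    calc sigmaS c.2 * c.1 = c.1⁻¹ * (c.1 * sigmaS c.2) * c.1 := by group
      _ = c.1⁻¹ * e * c.1 := by rw [h3]
      _ = c.1⁻¹ * c.1 * e := by rw [mul_assoc, show e * c.1 = c.1 * e from hcome c.1, ← mul_assoc]
      _ = e := by group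
  have hee : ∀ y : SL2, e * y * e⁻¹ = y := fun y => by
    rw [hcome y]; group
  -- the equivalence
  refine ⟨MulAut.conj ((sigmaS c.1)⁻¹, (1 : SL2)),
    ⟨((sigmaS c.1)⁻¹, (1 : SL2)), Or.inl fun g => by rw [MulAut.conj_apply]⟩, fun g => ?_⟩
  rw [MulAut.conj_symm_apply, MulAut.conj_apply, hσ]
  apply Prod.ext <;>
    simp only [Prod.fst_mul, Prod.fst_inv, Prod.snd_mul, Prod.snd_inv, inv_inv, inv_one,
      one_mul, mul_one]
  · -- first component
    show sigmaS g.2 = (sigmaS c.1)⁻¹ * sigmaS (c.1 * g.2 * c.1⁻¹) * sigmaS c.1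
    rw [sigmaS_mul, sigmaS_mul, sigmaS_inv]
    group
  · -- second component
    show sigmaS g.1 = sigmaS (c.2 * (sigmaS c.1 * g.1 * (sigmaS c.1)⁻¹) * c.2⁻¹)
    rw [sigmaS_mul, sigmaS_mul, sigmaS_mul, sigmaS_mul, sigmaS_inv, sigmaS_inv, sigmaS_sigmaS]
    rw [show sigmaS c.2 * (c.1 * sigmaS g.1 * c.1⁻¹) * (sigmaS c.2)⁻¹
      = (sigmaS c.2 * c.1) * sigmaS g.1 * (sigmaS c.2 * c.1)⁻¹ by group, hsc2, hee]

end RS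
open RS in
lemma part3 (σ : G2 → G2) (h : IsRealGroupStructure σ) :
    EquivStruct σ tau1 ∨ EquivStruct σ tau2 ∨ EquivStruct σ tau3 ∨ EquivStruct σ tau4 := by
  obtain ⟨hmul, hinv, c, hcase | hcase⟩ := h
  · -- product-type case
    have hσ : ∀ g : G2, σ g = (sigmaS (c.1 * g.1 * c.1⁻¹), sigmaS (c.2 * g.2 * c.2⁻¹)) := by
      intro g
      rw [← sigmaSS_invol (σ g), show sigmaSS (σ g) = c * g * c⁻¹ from hcase g]
      rfl
    have hz1 : ∀ x : SL2, (sigmaS c.1 * c.1) * x = x * (sigmaS c.1 * c.1) := by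
      intro x
      have h2 := congrArg Prod.fst (hinv (x, 1))
      rw [hσ (x, 1), hσ _] at h2
      simp only [Prod.fst, Prod.snd] at h2
      rw [sigmaS_mul, sigmaS_mul, sigmaS_inv, sigmaS_sigmaS] at h2
      calc (sigmaS c.1 * c.1) * x
          = (sigmaS c.1 * (c.1 * x * c.1⁻¹) * (sigmaS c.1)⁻¹) * (sigmaS c.1 * c.1) := by group
        _ = x * (sigmaS c.1 * c.1) := by rw [h2]
    have hz2 : ∀ x : SL2, (sigmaS c.2 * c.2) * x = x * (sigmaS c.2 * c.2) := by
      intro x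
      have h2 := congrArg Prod.snd (hinv (1, x))
      rw [hσ (1, x), hσ _] at h2
      simp only [Prod.fst, Prod.snd] at h2
      rw [sigmaS_mul, sigmaS_mul, sigmaS_inv, sigmaS_sigmaS] at h2
      calc (sigmaS c.2 * c.2) * x
          = (sigmaS c.2 * (c.2 * x * c.2⁻¹) * (sigmaS c.2)⁻¹) * (sigmaS c.2 * c.2) := by group
        _ = x * (sigmaS c.2 * c.2) := by rw [h2]
    obtain ⟨a₁, h₁⟩ := factor c.1 hz1
    obtain ⟨a₂, h₂⟩ := factor c.2 hz2
    rcases h₁ with h₁ | h₁ <;> rcases h₂ with h₂ | h₂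
    · exact Or.inl (build_inner σ c (a₁, a₂) sigmaS sigmaS hσ h₁ h₂)
    · exact Or.inr (Or.inl (build_inner σ c (a₁, a₂) sigmaS sigmaC hσ h₁ h₂))
    · exact Or.inr (Or.inl (build_swap σ c a₁ a₂ sigmaC sigmaS hσ h₁ h₂))
    · exact Or.inr (Or.inr (Or.inl (build_inner σ c (a₁, a₂) sigmaC sigmaC hσ h₁ h₂)))
  · -- swap-type case
    have hσ : ∀ g : G2, σ g = (sigmaS (c.1 * g.2 * c.1⁻¹), sigmaS (c.2 * g.1 * c.2⁻¹)) := by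
      intro g
      rw [← sigmaSS_invol (σ g), show sigmaSS (σ g) = c * (g.2, g.1) * c⁻¹ from hcase g]
      rfl
    exact Or.inr (Or.inr (Or.inr (swap_case σ c hσ hinv)))


/-- Up to equivalence, `SL₂ × SL₂` has exactly four real group structures:
`σ_s × σ_s`, `σ_s × σ_c`, `σ_c × σ_c` and the swap structure
`(g₁,g₂) ↦ (σ_s(g₂), σ_s(g₁))`; these four are pairwise inequivalent and every real
group structure on `SL₂ × SL₂` is equivalent to one of them. -/
theorem real_structures_on_SL2_times_SL2 :
    (IsRealGroupStructure tau1 ∧ IsRealGroupStructure tau2 ∧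
      IsRealGroupStructure tau3 ∧ IsRealGroupStructure tau4) ∧
    (∀ τ τ' : G2 → G2, τ ∈ [tau1, tau2, tau3, tau4] → τ' ∈ [tau1, tau2, tau3, tau4] →
      τ ≠ τ' → ¬ EquivStruct τ τ') ∧
    (∀ σ : G2 → G2, IsRealGroupStructure σ →
      EquivStruct σ tau1 ∨ EquivStruct σ tau2 ∨ EquivStruct σ tau3 ∨
        EquivStruct σ tau4) := by
  exact ⟨part1, part2, part3⟩
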